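/- Let X, Y be nonempty metric spaces, let r ≥ 0, and let R be a correspondence between X and Y such that for all (x,y), (x',y') ∈ R one has e^{−r}·d_Y(y,y') − e^r + 1 ≤ d_X(x,x') ≤ e^r·d_Y(y,y') + e^{2r} − e^r. For t ∈ [0,1], let d_t be the pseudometric on the set R defined by d_t((x,y), (x',y')) = (1−t)·d_X(x,x') + t·d_Y(y,y'). Then for all s, t ∈ [0,1] and all p, q ∈ R, setting δ = |s − t|, one has d_s(p, q) ≤ (1 + δ·(e^r − 1))·d_t(p, q) + δ·(e^{2r} − e^r). -/
import Mathlib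


open Real

/-- A correspondence between X and Y: both projections are surjective. -/
def IsCorrespondence {X Y : Type*} (R : Set (X × Y)) : Prop :=
  (∀ x : X, ∃ y : Y, (x, y) ∈ R) ∧ (∀ y : Y, ∃ x : X, (x, y) ∈ R)

/-- Lipschitz-type estimate between the interpolated pseudometrics d_s and d_t
on a correspondence R of quasi-isometric distortion at most r. -/
theorem interpolated_pseudometric_estimate
    {X Y : Type*} [MetricSpace X] [MetricSpace Y] [Nonempty X] [Nonempty Y]
    (r : ℝ) (hr : 0 ≤ r) (R : Set (X × Y)) (hR : IsCorrespondence R)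
    (hRdis : ∀ p ∈ R, ∀ q ∈ R,
      exp (-r) * dist p.2 q.2 - exp r + 1 ≤ dist p.1 q.1 ∧
      dist p.1 q.1 ≤ exp r * dist p.2 q.2 + exp (2 * r) - exp r)
    (s t : ℝ) (hs : s ∈ Set.Icc (0 : ℝ) 1) (ht : t ∈ Set.Icc (0 : ℝ) 1)
    (p q : X × Y) (hp : p ∈ R) (hq : q ∈ R) :
    (1 - s) * dist p.1 q.1 + s * dist p.2 q.2 ≤
      (1 + |s - t| * (exp r - 1)) * ((1 - t) * dist p.1 q.1 + t * dist p.2 q.2) +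
        |s - t| * (exp (2 * r) - exp r) := by
  obtain ⟨hs0, hs1⟩ := hs
  obtain ⟨ht0, ht1⟩ := ht
  obtain ⟨h1, h2⟩ := hRdis p hp q hq
  set a := dist p.1 q.1 with ha_def
  set b := dist p.2 q.2 with hb_def
  have ha0 : 0 ≤ a := dist_nonneg
  have hb0 : 0 ≤ b := dist_nonneg
  set E := exp r with hE_def
  have hE1 : 1 ≤ E := Real.one_le_exp hr
  have h2r : exp (2 * r) = E ^ 2 := by
    rw [two_mul, Real.exp_add]; ring
  have hinv : E * exp (-r) = 1 := by
    rw [← Real.exp_add]; simp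
  have hab : a ≤ E * b + (E ^ 2 - E) := by rw [h2r] at h2; linarith
  have hba : b ≤ E * a + (E ^ 2 - E) := by nlinarith [Real.exp_pos (-r)]
  have key1 : a - b ≤ (E - 1) * ((1 - t) * a + t * b) + (E ^ 2 - E) := by
    nlinarith [mul_nonneg ht0 hb0, mul_nonneg (sub_nonneg.2 ht1) ha0,
      mul_nonneg (mul_nonneg ht0 hb0) (sub_nonneg.2 hE1),
      mul_nonneg (mul_nonneg (sub_nonneg.2 ht1) ha0) (sub_nonneg.2 hE1),
      sq_nonneg (E - 1), mul_nonneg (sub_nonneg.2 hE1) (sub_nonneg.2 hE1)]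
  have key2 : b - a ≤ (E - 1) * ((1 - t) * a + t * b) + (E ^ 2 - E) := by
    nlinarith [mul_nonneg ht0 hb0, mul_nonneg (sub_nonneg.2 ht1) ha0,
      mul_nonneg (mul_nonneg ht0 hb0) (sub_nonneg.2 hE1),
      mul_nonneg (mul_nonneg (sub_nonneg.2 ht1) ha0) (sub_nonneg.2 hE1),
      sq_nonneg (E - 1)]
  rw [h2r]
  rcases le_total s t with h | h
  · rw [abs_of_nonpos (by linarith), neg_sub]
    have H := mul_le_mul_of_nonneg_left key1 (by linarith : (0:ℝ) ≤ t - s)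
    nlinarith [H]
  · rw [abs_of_nonneg (by linarith)]
    have H := mul_le_mul_of_nonneg_left key2 (by linarith : (0:ℝ) ≤ s - t)
    nlinarith [H]
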